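/- Let E be a real inner product space, η > 0, G ≥ 0, and let p_1, …, p_N ≥ 0 with Σ_n p_n = 1. Let ω_{n,0} ∈ E be given, and for i ≥ 1 define ω_{n,i} = ω_{n,i−1} − η g_{n,i−1}, where the update vectors satisfy ‖g_{n,i}‖ ≤ G for all n and i. Set ω̄_i = Σ_{n=1}^N p_n ω_{n,i}. Then for every i ≥ 0, Σ_{n=1}^N p_n ‖ω̄_i − ω_{n,i}‖² ≤ (1+η)^i · Σ_{n=1}^N p_n ‖ω̄_0 − ω_{n,0}‖² + ((1+η)^{i+1} − (1+η)) · G². -/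

import Mathlib

open Finset


lemma young_norm {E : Type*} [NormedAddCommGroup E] [InnerProductSpace ℝ E]
    (η : ℝ) (hη : 0 < η) (a b : E) :
    ‖a + b‖ ^ 2 ≤ (1 + η) * ‖a‖ ^ 2 + (1 + 1 / η) * ‖b‖ ^ 2 := by
  have hexp : ‖a + b‖ ^ 2 = ‖a‖ ^ 2 + 2 * inner ℝ a b + ‖b‖ ^ 2 := norm_add_sq_real a b
  have hab : (inner ℝ a b : ℝ) ≤ ‖a‖ * ‖b‖ := real_inner_le_norm a b
  have hinv : η * (1 / η) = 1 := mul_one_div_cancel hη.ne'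
  have key2 : η * (2 * (inner ℝ a b : ℝ)) ≤ η * (η * ‖a‖ ^ 2 + (1 / η) * ‖b‖ ^ 2) := by
    nlinarith [sq_nonneg (η * ‖a‖ - ‖b‖), norm_nonneg a, norm_nonneg b]
  have key := le_of_mul_le_mul_left key2 hη
  rw [hexp]; linarith

lemma mean_min {E : Type*} [NormedAddCommGroup E] [InnerProductSpace ℝ E]
    {N : ℕ} (p : Fin N → ℝ) (hpsum : ∑ n, p n = 1) (x : Fin N → E) (c : E) :
    ∑ n, p n * ‖(∑ m, p m • x m) - x n‖ ^ 2 ≤ ∑ n, p n * ‖c - x n‖ ^ 2 := by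
  set μ := ∑ m, p m • x m with hμ
  have hzero : ∑ n, p n • (μ - x n) = 0 := by
    simp only [smul_sub, Finset.sum_sub_distrib, ← Finset.sum_smul, hpsum, one_smul]
    simp [hμ]
  have hexpand : ∀ n, ‖c - x n‖ ^ 2
      = ‖c - μ‖ ^ 2 + 2 * inner ℝ (c - μ) (μ - x n) + ‖μ - x n‖ ^ 2 := by
    intro n
    have h : c - x n = (c - μ) + (μ - x n) := by abel
    rw [h, norm_add_sq_real]
  have hcross : ∑ n, p n * (inner ℝ (c - μ) (μ - x n) : ℝ)
      = inner ℝ (c - μ) (∑ n, p n • (μ - x n)) := by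
    rw [inner_sum]
    simp [real_inner_smul_right]
  have hsum : ∑ n, p n * ‖c - x n‖ ^ 2
      = ‖c - μ‖ ^ 2 + ∑ n, p n * ‖μ - x n‖ ^ 2 := by
    calc ∑ n, p n * ‖c - x n‖ ^ 2
        = ∑ n, (p n * ‖c - μ‖ ^ 2 + p n * (2 * inner ℝ (c - μ) (μ - x n)) +
            p n * ‖μ - x n‖ ^ 2) := by
          refine Finset.sum_congr rfl fun n _ => ?_
          rw [hexpand n]; ring
      _ = (∑ n, p n) * ‖c - μ‖ ^ 2 + (∑ n, p n * (2 * (inner ℝ (c - μ) (μ - x n) : ℝ))) +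
            ∑ n, p n * ‖μ - x n‖ ^ 2 := by
          rw [Finset.sum_add_distrib, Finset.sum_add_distrib, ← Finset.sum_mul]
      _ = ‖c - μ‖ ^ 2 + ∑ n, p n * ‖μ - x n‖ ^ 2 := by
          have h2c : ∑ n, p n * (2 * (inner ℝ (c - μ) (μ - x n) : ℝ))
              = 2 * ∑ n, p n * (inner ℝ (c - μ) (μ - x n) : ℝ) := by
            rw [Finset.mul_sum]; exact Finset.sum_congr rfl fun n _ => by ring
          rw [h2c, hcross, hzero, hpsum, inner_zero_right]; ring
  rw [hsum]
  nlinarith [sq_nonneg ‖c - μ‖]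

/-- The deterministic core of Lemma 6 (Appendix G): under bounded update vectors
`‖g_{n,i}‖ ≤ G` and updates `ω_{n,i} = ω_{n,i−1} − η g_{n,i−1}`, the weighted drift
from the virtual average satisfies, for every `i ≥ 0`,
`Σ_n p_n ‖ω̄_i − ω_{n,i}‖² ≤ (1+η)^i Σ_n p_n ‖ω̄_0 − ω_{n,0}‖²
  + ((1+η)^{i+1} − (1+η)) G²`. -/
theorem local_drift_bound
    {E : Type*} [NormedAddCommGroup E] [InnerProductSpace ℝ E]
    {N : ℕ} (η G : ℝ) (hη : 0 < η) (hG : 0 ≤ G)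
    (p : Fin N → ℝ) (hp : ∀ n, 0 ≤ p n) (hpsum : ∑ n, p n = 1)
    (ω : ℕ → Fin N → E) (g : ℕ → Fin N → E)
    (hgbound : ∀ i n, ‖g i n‖ ≤ G)
    (hrec : ∀ i n, ω (i + 1) n = ω i n - η • g i n) :
    ∀ i : ℕ,
      ∑ n, p n * ‖(∑ m, p m • ω i m) - ω i n‖ ^ 2 ≤
        (1 + η) ^ i * ∑ n, p n * ‖(∑ m, p m • ω 0 m) - ω 0 n‖ ^ 2 +
          ((1 + η) ^ (i + 1) - (1 + η)) * G ^ 2 := by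

  intro i
  induction i with
  | zero => simp
  | succ i ih =>
    set D : ℕ → ℝ := fun j => ∑ n, p n * ‖(∑ m, p m • ω j m) - ω j n‖ ^ 2 with hD
    have step : D (i + 1) ≤ (1 + η) * D i + η * (1 + η) * G ^ 2 := by
      have h1 := mean_min p hpsum (ω (i + 1)) (∑ m, p m • ω i m)
      refine le_trans h1 ?_
      have h2 : ∀ n, p n * ‖(∑ m, p m • ω i m) - ω (i + 1) n‖ ^ 2 ≤
          p n * ((1 + η) * ‖(∑ m, p m • ω i m) - ω i n‖ ^ 2 + η * (1 + η) * G ^ 2) := by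
        intro n
        refine mul_le_mul_of_nonneg_left ?_ (hp n)
        have heq : (∑ m, p m • ω i m) - ω (i + 1) n
            = ((∑ m, p m • ω i m) - ω i n) + η • g i n := by
          rw [hrec i n]; abel
        rw [heq]
        refine le_trans (young_norm η hη _ _) ?_
        have hg2 : ‖η • g i n‖ ^ 2 ≤ η ^ 2 * G ^ 2 := by
          rw [norm_smul, Real.norm_eq_abs, abs_of_pos hη, mul_pow]
          have := pow_le_pow_left₀ (norm_nonneg (g i n)) (hgbound i n) 2
          nlinarith [sq_nonneg η]
        have hfac : (1 + 1 / η) * (η ^ 2 * G ^ 2) = η * (1 + η) * G ^ 2 := by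
          field_simp; ring
        have h3 : (1 + 1 / η) * ‖η • g i n‖ ^ 2 ≤ η * (1 + η) * G ^ 2 := by
          rw [← hfac]
          refine mul_le_mul_of_nonneg_left hg2 ?_
          positivity
        linarith
      calc ∑ n, p n * ‖(∑ m, p m • ω i m) - ω (i + 1) n‖ ^ 2
          ≤ ∑ n, p n * ((1 + η) * ‖(∑ m, p m • ω i m) - ω i n‖ ^ 2 + η * (1 + η) * G ^ 2) :=
            Finset.sum_le_sum fun n _ => h2 n
        _ = (1 + η) * D i + η * (1 + η) * G ^ 2 := by
            rw [hD]
            simp only [mul_add, Finset.sum_add_distrib, ← Finset.sum_mul, hpsum, one_mul,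
              Finset.mul_sum]
            congr 1
            exact Finset.sum_congr rfl fun n _ => by ring
    have hpos : (0:ℝ) < 1 + η := by linarith
    have := mul_le_mul_of_nonneg_left ih (le_of_lt hpos)
    calc D (i + 1) ≤ (1 + η) * D i + η * (1 + η) * G ^ 2 := step
      _ ≤ (1 + η) * ((1 + η) ^ i * D 0 + ((1 + η) ^ (i + 1) - (1 + η)) * G ^ 2)
            + η * (1 + η) * G ^ 2 := by linarith
      _ = (1 + η) ^ (i + 1) * D 0 + ((1 + η) ^ (i + 1 + 1) - (1 + η)) * G ^ 2 := by ring
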